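/- Let m, θ ∈ ℝ, σ > 0, and β ∈ ℝ with Φ(β) > 1/2. Define pH = 1 − Φ((θ − m)/σ), pL = Φ((θ − m)/σ), and pU = Φ(β). Then the following three equivalences hold: (i) m − βσ > θ if and only if pH > pL and pH > pU; (ii) m + βσ < θ if and only if pL > pH and pL > pU; (iii) (m − βσ ≤ θ and m + βσ ≥ θ) if and only if pU ≥ pH and pU ≥ pL. (That is, the confidence-bound classification rule with parameter β coincides with classification by the largest of the three probabilities pH, pL, pU when Pr(x ∈ U_θ) is identified with Φ(β) > 1/2.) -/

import Mathlib

open MeasureTheory ProbabilityTheory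
open scoped NNReal

private lemma gauss_noAtoms : MeasureTheory.NoAtoms (gaussianReal 0 1) :=
  ⟨fun x => gaussianReal_absolutelyContinuous 0 one_ne_zero (measure_singleton x)⟩

private lemma gauss_strictMono : StrictMono (cdf (gaussianReal 0 1)) := by
  intro x y hxy
  have hpos : 0 < gaussianReal 0 1 (Set.Ioc x y) := by
    rw [pos_iff_ne_zero]
    intro h0
    have := (gaussianReal_absolutelyContinuous' 0 one_ne_zero) h0
    rw [Real.volume_Ioc] at this
    simp only [ENNReal.ofReal_eq_zero] at this
    linarith
  have hlt : gaussianReal 0 1 (Set.Iic x) < gaussianReal 0 1 (Set.Iic y) := by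
    calc gaussianReal 0 1 (Set.Iic x)
        < gaussianReal 0 1 (Set.Iic x) + gaussianReal 0 1 (Set.Ioc x y) :=
          ENNReal.lt_add_right (measure_ne_top _ _) hpos.ne'
      _ = gaussianReal 0 1 (Set.Iic y) := by
          rw [← measure_union (Set.Iic_disjoint_Ioc le_rfl) measurableSet_Ioc,
            Set.Iic_union_Ioc_eq_Iic hxy.le]
  rw [cdf_eq_real, cdf_eq_real, measureReal_def, measureReal_def]
  exact ENNReal.toReal_strict_mono (measure_ne_top _ _) hlt

private lemma gauss_symm (x : ℝ) :
    cdf (gaussianReal 0 1) (-x) = 1 - cdf (gaussianReal 0 1) x := by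
  haveI : NullSingletonClass (gaussianReal 0 1) := gauss_noAtoms
  have hmap : (gaussianReal 0 1).map (fun t : ℝ => (-1 : ℝ) * t) = gaussianReal 0 1 := by
    have h := gaussianReal_map_const_mul (μ := 0) (v := 1) (-1)
    have : (⟨(-1 : ℝ) ^ 2, sq_nonneg _⟩ : ℝ≥0) * 1 = 1 := by
      ext; norm_num
    rw [mul_zero] at h
    convert h using 2
    exact this.symm
  have hIic : gaussianReal 0 1 (Set.Iic (-x)) = gaussianReal 0 1 (Set.Ici x) := by
    conv_lhs => rw [← hmap]
    rw [Measure.map_apply (by fun_prop) measurableSet_Iic]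
    congr 1
    ext t
    simp only [Set.mem_preimage, Set.mem_Iic, Set.mem_Ici]
    constructor <;> intro <;> linarith
  have hIoi : gaussianReal 0 1 (Set.Ici x) = gaussianReal 0 1 (Set.Ioi x) :=
    (measure_congr (Ioi_ae_eq_Ici (μ := gaussianReal 0 1) (a := x))).symm
  have hsum : gaussianReal 0 1 (Set.Iic x) + gaussianReal 0 1 (Set.Ioi x) = 1 := by
    rw [← measure_union (Set.Iic_disjoint_Ioi le_rfl) measurableSet_Ioi,
      Set.Iic_union_Ioi, measure_univ]
  have hsum' : (gaussianReal 0 1 (Set.Iic x)).toReal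
      + (gaussianReal 0 1 (Set.Ioi x)).toReal = 1 := by
    rw [← ENNReal.toReal_add (measure_ne_top _ _) (measure_ne_top _ _), hsum, ENNReal.toReal_one]
  rw [cdf_eq_real, cdf_eq_real, measureReal_def, measureReal_def, hIic, hIoi]
  linarith

private lemma gauss_zero : cdf (gaussianReal 0 1) 0 = 1 / 2 := by
  have := gauss_symm 0
  rw [neg_zero] at this
  linarith

theorem stmt_15
    (m θ σ β : ℝ) (hσ : 0 < σ)
    (Φ : ℝ → ℝ) (hΦ : ∀ t, Φ t = cdf (gaussianReal 0 1) t)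
    (hβ : 1 / 2 < Φ β)
    (pH pL pU : ℝ)
    (hpH : pH = 1 - Φ ((θ - m) / σ))
    (hpL : pL = Φ ((θ - m) / σ))
    (hpU : pU = Φ β) :
    (θ < m - β * σ ↔ pL < pH ∧ pU < pH) ∧
    (m + β * σ < θ ↔ pH < pL ∧ pU < pL) ∧
    ((m - β * σ ≤ θ ∧ θ ≤ m + β * σ) ↔ pH ≤ pU ∧ pL ≤ pU) := by
  have hΦ' : Φ = fun t => cdf (gaussianReal 0 1) t := funext hΦ
  subst hΦ' hpH hpL hpU
  set F : ℝ → ℝ := fun t => cdf (gaussianReal 0 1) t with hF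
  have hlt : ∀ a b : ℝ, F a < F b ↔ a < b := fun a b => gauss_strictMono.lt_iff_lt
  have hle : ∀ a b : ℝ, F a ≤ F b ↔ a ≤ b := fun a b => gauss_strictMono.le_iff_le
  have h0 : F 0 = 1 / 2 := gauss_zero
  have hsym : ∀ t : ℝ, F (-t) = 1 - F t := gauss_symm
  set x : ℝ := (θ - m) / σ with hx
  have hβpos : 0 < β := by
    rw [← hlt 0 β, h0]; exact hβ
  have e1 : θ < m - β * σ ↔ x < -β := by
    rw [hx, div_lt_iff₀ hσ]; constructor <;> intro <;> nlinarith
  have e2 : m + β * σ < θ ↔ β < x := by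
    rw [hx, lt_div_iff₀ hσ]; constructor <;> intro <;> nlinarith
  have e3 : m - β * σ ≤ θ ↔ -β ≤ x := by
    rw [hx, le_div_iff₀ hσ]; constructor <;> intro <;> nlinarith
  have e4 : θ ≤ m + β * σ ↔ x ≤ β := by
    rw [hx, div_le_iff₀ hσ]; constructor <;> intro <;> nlinarith
  have k1 : F x < 1 - F x ↔ x < 0 := by
    rw [← hlt x 0, h0]; constructor <;> intro <;> linarith
  have k2 : F β < 1 - F x ↔ x < -β := by
    rw [← hsym x, hlt]; exact lt_neg
  have k3 : 1 - F x < F x ↔ 0 < x := by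
    rw [← hlt 0 x, h0]; constructor <;> intro <;> linarith
  have k4 : F β < F x ↔ β < x := hlt β x
  have k5 : 1 - F x ≤ F β ↔ -β ≤ x := by
    rw [← hsym x, hle]; exact neg_le
  have k6 : F x ≤ F β ↔ x ≤ β := hle x β
  refine ⟨?_, ?_, ?_⟩
  · rw [e1, k1, k2]
    constructor
    · intro h; exact ⟨by linarith, h⟩
    · exact fun h => h.2
  · rw [e2, k3, k4]
    constructor
    · intro h; exact ⟨by linarith, h⟩
    · exact fun h => h.2
  · rw [e3, e4, k5, k6]
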